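/- Let K be an algebraically closed field and k ≥ 3. Let T be a k-tensor of format (n_1,…,n_k) over K with pR(T) ≥ 2, and let m_1,…,m_k ≥ 2 be integers. Then there exist linear maps π_i : K^{n_i} → K^{m_i} such that pR((π_1 ⊗ ⋯ ⊗ π_k)T) ≥ 2. -/

import Mathlib

namespace GapSubrank

variable {K : Type*} [Field K]

/-- Apply a tuple of linear maps (given as matrices, one per tensor leg) to a tensor. -/
noncomputable def applyMaps {a : Type*} [Fintype a] [DecidableEq a] {ι κ : a → Type*}
    [∀ i, Fintype (ι i)]
    (A : ∀ i, κ i → ι i → K) (T : (∀ i, ι i) → K) : (∀ i, κ i) → K :=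
  fun y => ∑ x : ∀ i, ι i, (∏ i, A i (y i) (x i)) * T x

/-- `T` restricts to `S`. -/
def Restricts {a : Type*} [Fintype a] [DecidableEq a] {ι κ : a → Type*}
    [∀ i, Fintype (ι i)]
    (T : (∀ i, ι i) → K) (S : (∀ i, κ i) → K) : Prop :=
  ∃ A : ∀ i, κ i → ι i → K, applyMaps A T = S

/-- The unit (identity/diagonal) tensor of order `a` and rank `r`. -/
def unitTensor (K : Type*) [Field K] (a : Type*) [Fintype a] (r : ℕ) :
    (a → Fin r) → K :=
  fun x => if ∀ i j : a, x i = x j then 1 else 0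

/-- The subrank of a tensor: the largest `r` such that `T` restricts to the unit tensor. -/
noncomputable def subrank {a : Type*} [Fintype a] [DecidableEq a] {ι : a → Type*}
    [∀ i, Fintype (ι i)] (T : (∀ i, ι i) → K) : ℕ :=
  sSup {r : ℕ | Restricts T (unitTensor K a r)}

/-- The `N`-th Kronecker power of a tensor. -/
def kronPow {a : Type*} {ι : a → Type*} (N : ℕ) (T : (∀ i, ι i) → K) :
    (∀ i, Fin N → ι i) → K :=
  fun x => ∏ j : Fin N, T fun i => x i j

/-- The flattening of a tensor with respect to a subset `I` of the legs. -/
def flatten {a : Type*} [DecidableEq a] {ι : a → Type*}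
    (T : (∀ i, ι i) → K) (I : Finset a) :
    Matrix (∀ i : {i // i ∈ I}, ι i) (∀ i : {i // i ∉ I}, ι i) K :=
  Matrix.of fun p q => T fun i => if h : i ∈ I then p ⟨i, h⟩ else q ⟨i, h⟩

/-- A tensor has partition rank one if some flattening w.r.t. a nonempty proper subset
of the legs has matrix rank one. -/
def HasPartitionRankOne {a : Type*} [Fintype a] [DecidableEq a] {ι : a → Type*}
    [∀ i, Fintype (ι i)] (T : (∀ i, ι i) → K) : Prop :=
  ∃ I : Finset a, I ≠ ∅ ∧ I ≠ Finset.univ ∧ (flatten T I).rank = 1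

/-- The partition rank: least `r` such that `T` is a sum of `r` partition-rank-one tensors. -/
noncomputable def prank {a : Type*} [Fintype a] [DecidableEq a] {ι : a → Type*}
    [∀ i, Fintype (ι i)] (T : (∀ i, ι i) → K) : ℕ :=
  sInf {r : ℕ | ∃ f : Fin r → ((∀ i, ι i) → K),
    (∀ j, HasPartitionRankOne (f j)) ∧ T = ∑ j, f j}

/-- A tensor has slice rank one if some one-leg flattening has matrix rank one. -/
def HasSliceRankOne {a : Type*} [Fintype a] [DecidableEq a] {ι : a → Type*}
    [∀ i, Fintype (ι i)] (T : (∀ i, ι i) → K) : Prop :=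
  ∃ p : a, (flatten T {p}).rank = 1

/-- The slice rank: least `r` such that `T` is a sum of `r` slice-rank-one tensors. -/
noncomputable def srank {a : Type*} [Fintype a] [DecidableEq a] {ι : a → Type*}
    [∀ i, Fintype (ι i)] (T : (∀ i, ι i) → K) : ℕ :=
  sInf {r : ℕ | ∃ f : Fin r → ((∀ i, ι i) → K),
    (∀ j, HasSliceRankOne (f j)) ∧ T = ∑ j, f j}

/-- The constant `c_k = k / (k-1)^((k-1)/k)`. -/
noncomputable def ck (k : ℕ) : ℝ :=
  (k : ℝ) / ((k : ℝ) - 1) ^ (((k : ℝ) - 1) / (k : ℝ))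

/-- A point `v` is in the Zariski closure of `X`: every polynomial function in the
coordinates vanishing on `X` vanishes at `v`. -/
def InZariskiClosure {σ : Type*} (X : Set (σ → K)) (v : σ → K) : Prop :=
  ∀ p : MvPolynomial σ K, (∀ x ∈ X, MvPolynomial.eval x p = 0) → MvPolynomial.eval v p = 0

/-- The W-tensor: coefficient `1` exactly on tuples with one coordinate equal to the second
basis index and all others equal to the first basis index. -/
def wTensor (K : Type*) [Field K] {a : Type*} [Fintype a] [DecidableEq a] (n : a → ℕ) :
    (∀ i, Fin (n i)) → K :=
  fun x => if ∃ j, (x j : ℕ) = 1 ∧ ∀ i, i ≠ j → (x i : ℕ) = 0 then 1 else 0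

/-- The orbit of a tensor under the product of general linear groups acting on the legs. -/
noncomputable def tensorOrbit {a : Type*} [Fintype a] [DecidableEq a] {ι : a → Type*}
    [∀ i, Fintype (ι i)] [∀ i, DecidableEq (ι i)]
    (T : (∀ i, ι i) → K) : Set ((∀ i, ι i) → K) :=
  {S | ∃ g : ∀ i, Matrix (ι i) (ι i) K, (∀ i, IsUnit (g i)) ∧
    S = applyMaps (fun i y x => g i y x) T}

end GapSubrank

namespace PrankAux

open GapSubrank Matrix

variable {K : Type*} [Field K]

lemma two_le_rank_of_minor {R C : Type*} [Fintype R] [Fintype C] [DecidableEq C]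
    {M : Matrix R C K} {r1 r2 : R} {c1 c2 : C}
    (h : M r1 c1 * M r2 c2 - M r1 c2 * M r2 c1 ≠ 0) : 2 ≤ M.rank := by
  classical
  set N : Matrix (Fin 2) (Fin 2) K := Matrix.of ![![M r1 c1, M r1 c2], ![M r2 c1, M r2 c2]]
    with hNdef
  have hdet : N.det ≠ 0 := by
    rw [Matrix.det_fin_two]
    simpa [hNdef] using h
  have hN : IsUnit N := Matrix.isUnit_iff_isUnit_det _ |>.mpr (isUnit_iff_ne_zero.mpr hdet)
  have hrowsN : LinearIndependent K (fun i => N i) :=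
    Matrix.linearIndependent_rows_iff_isUnit.mpr hN
  have hli : LinearIndependent K ![M r1, M r2] := by
    apply LinearIndependent.of_comp (LinearMap.funLeft K K ![c1, c2])
    have heq : (LinearMap.funLeft K K ![c1, c2]) ∘ ![M r1, M r2] = fun i => N i := by
      funext j t
      fin_cases j <;> fin_cases t <;> rfl
    rw [heq]
    exact hrowsN
  have h2 : Module.finrank K (Submodule.span K (Set.range ![M r1, M r2])) = 2 := by
    rw [finrank_span_eq_card hli]; simp
  have hle : Submodule.span K (Set.range ![M r1, M r2]) ≤ Submodule.span K (Set.range M) := by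
    apply Submodule.span_mono
    rintro - ⟨j, rfl⟩
    fin_cases j
    · exact ⟨r1, rfl⟩
    · exact ⟨r2, rfl⟩
  calc (2:ℕ) = Module.finrank K (Submodule.span K (Set.range ![M r1, M r2])) := h2.symm
    _ ≤ Module.finrank K (Submodule.span K (Set.range M)) := Submodule.finrank_mono hle
    _ = M.rank := M.rank_eq_finrank_span_row.symm

lemma rank_le_one_of_minors {R C : Type*} [Fintype R] [Fintype C]
    {M : Matrix R C K}
    (h : ∀ r1 r2 c1 c2, M r1 c1 * M r2 c2 = M r1 c2 * M r2 c1) : M.rank ≤ 1 := by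
  classical
  by_cases h0 : M = 0
  · simp [h0, Matrix.rank_zero]
  · obtain ⟨r0, c0, hrc⟩ : ∃ r0 c0, M r0 c0 ≠ 0 := by
      by_contra hc; push_neg at hc
      exact h0 (by ext r c; simp [hc])
    have hrow : ∀ r, M r = (M r c0 / M r0 c0) • M r0 := by
      intro r; funext c
      show M r c = (M r c0 / M r0 c0) * M r0 c
      rw [div_mul_eq_mul_div, eq_div_iff hrc]
      exact (h r r0 c0 c).symm
    have hsub : Submodule.span K (Set.range M) ≤ Submodule.span K {M r0} := by
      rw [Submodule.span_le]
      rintro - ⟨r, rfl⟩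
      rw [hrow r]
      exact Submodule.smul_mem _ _ (Submodule.mem_span_singleton_self _)
    calc M.rank = Module.finrank K (Submodule.span K (Set.range M)) :=
          M.rank_eq_finrank_span_row
      _ ≤ Module.finrank K (Submodule.span K {M r0}) := Submodule.finrank_mono hsub
      _ ≤ ({M r0} : Set (C → K)).toFinset.card := finrank_span_le_card _
      _ ≤ 1 := by simp

lemma rank_ne_zero_of_ne_zero {R C : Type*} [Fintype R] [Fintype C]
    {M : Matrix R C K} (h : M ≠ 0) : M.rank ≠ 0 := by
  intro h0
  rw [M.rank_eq_finrank_span_row] at h0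
  have hb : Submodule.span K (Set.range M) = ⊥ := Submodule.finrank_eq_zero.mp h0
  apply h
  ext r c
  have hr : M r ∈ Submodule.span K (Set.range M) := Submodule.subset_span ⟨r, rfl⟩
  rw [hb, Submodule.mem_bot] at hr
  rw [hr]
  rfl

/-- If a flattening of `T` vanishes, so does `T`. -/
lemma eq_zero_of_flatten_eq_zero {a : Type*} [Fintype a] [DecidableEq a] {ι : a → Type*}
    [∀ i, Fintype (ι i)] {T : (∀ i, ι i) → K} {I : Finset a}
    (h : flatten T I = 0) : T = 0 := by
  funext x
  have := congrFun (congrFun h (fun i : {i // i ∈ I} => x i.1)) (fun i : {i // i ∉ I} => x i.1)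
  simpa [flatten] using this

/-- A tensor with at most one nonzero entry, which is nonzero, has partition rank one. -/
lemma hasPartitionRankOne_single {k : ℕ} (hk : 3 ≤ k) {m : Fin k → ℕ}
    (x0 : ∀ i, Fin (m i)) {c : K} (hc : c ≠ 0) :
    HasPartitionRankOne (fun y => if y = x0 then c else 0) := by
  classical
  have h0k : 0 < k := by omega
  refine ⟨{⟨0, h0k⟩}, by simp, ?_, ?_⟩
  · intro h
    have h1 : (⟨1, by omega⟩ : Fin k) ∈ ({(⟨0, h0k⟩ : Fin k)} : Finset (Fin k)) := by
      rw [h]; exact Finset.mem_univ _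
    rw [Finset.mem_singleton] at h1
    exact absurd (congrArg Fin.val h1) (by simp)
  · set I : Finset (Fin k) := {⟨0, h0k⟩} with hI
    set N := flatten (fun y => if y = x0 then c else 0) I with hNdef
    have hN : ∀ (p : ∀ i : {i // i ∈ I}, Fin (m i.1)) (q : ∀ i : {i // i ∉ I}, Fin (m i.1)),
        N p q =
        if (p = fun i : {i // i ∈ I} => x0 i.1) ∧ (q = fun i : {i // i ∉ I} => x0 i.1)
          then c else 0 := by
      intro p q
      show (if (fun i => if h : i ∈ I then p ⟨i, h⟩ else q ⟨i, h⟩) = x0 then c else 0) = _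
      congr 1
      simp only [eq_iff_iff]
      constructor
      · intro hf
        constructor
        · funext i
          have := congrFun hf i.1
          rwa [dif_pos i.2] at this
        · funext i
          have := congrFun hf i.1
          rwa [dif_neg i.2] at this
      · rintro ⟨hp, hq⟩
        funext i
        by_cases h : i ∈ I
        · rw [dif_pos h, hp]
        · rw [dif_neg h, hq]
    have hle : N.rank ≤ 1 := by
      apply rank_le_one_of_minors
      intro r1 r2 c1 c2
      rw [hN, hN, hN, hN]
      have hmul : ∀ (A B : Prop) (dA : Decidable A) (dB : Decidable B),
          (if A then c else 0) * (if B then c else 0) = if A ∧ B then c * c else 0 := by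
        intro A B dA dB
        split_ifs <;> simp_all
      rw [hmul, hmul]
      exact if_congr (by tauto) rfl rfl
    have hne : N.rank ≠ 0 := by
      apply rank_ne_zero_of_ne_zero
      intro h0
      have := congrFun (congrFun h0 (fun i => x0 i.1)) (fun i => x0 i.1)
      rw [hN] at this
      simp at this
      exact hc this
    omega

/-- Every tensor is a finite sum of partition-rank-one tensors (when `k ≥ 3`). -/
lemma exists_decomp {k : ℕ} (hk : 3 ≤ k) {m : Fin k → ℕ}
    (S : (∀ i, Fin (m i)) → K) :
    ∃ r, ∃ f : Fin r → ((∀ i, Fin (m i)) → K),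
      (∀ j, HasPartitionRankOne (f j)) ∧ S = ∑ j, f j := by
  classical
  set s : Finset (∀ i, Fin (m i)) := Finset.univ.filter (fun x => S x ≠ 0) with hs
  set e := s.equivFin with he
  refine ⟨s.card, fun j => fun y => if y = (e.symm j : ∀ i, Fin (m i)) then S (e.symm j : ∀ i, Fin (m i)) else 0, ?_, ?_⟩
  · intro j
    apply hasPartitionRankOne_single hk
    have hmem : (e.symm j : ∀ i, Fin (m i)) ∈ Finset.univ.filter (fun x => S x ≠ 0) :=
      (e.symm j).2
    exact (Finset.mem_filter.mp hmem).2
  · funext y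
    rw [Finset.sum_apply]
    have step1 : ∑ j : Fin s.card,
        (if y = (e.symm j : ∀ i, Fin (m i)) then S (e.symm j : ∀ i, Fin (m i)) else 0)
        = ∑ x : {x // x ∈ s}, (if y = (x : ∀ i, Fin (m i)) then S (x : ∀ i, Fin (m i)) else 0) :=
      Equiv.sum_comp e.symm
        (fun x : {x // x ∈ s} => if y = (x : ∀ i, Fin (m i)) then S (x : ∀ i, Fin (m i)) else 0)
    rw [step1, Finset.sum_coe_sort s (fun x => if y = x then S x else 0)]
    rw [Finset.sum_ite_eq s y S]
    by_cases hy : y ∈ s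
    · rw [if_pos hy]
    · rw [if_neg hy]
      rw [hs, Finset.mem_filter] at hy
      push_neg at hy
      exact hy (Finset.mem_univ y)

/-- If a tensor is nonzero, not of partition rank one, and admits some decomposition,
then its partition rank is at least two. -/
lemma two_le_prank {a : Type*} [Fintype a] [DecidableEq a] {ι : a → Type*}
    [∀ i, Fintype (ι i)] {T : (∀ i, ι i) → K}
    (h0 : T ≠ 0) (h1 : ¬ HasPartitionRankOne T)
    (hne : ∃ r, ∃ f : Fin r → ((∀ i, ι i) → K),
      (∀ j, HasPartitionRankOne (f j)) ∧ T = ∑ j, f j) :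
    2 ≤ prank T := by
  obtain ⟨r, f, hf, hsum⟩ := hne
  set P : Set ℕ := {r : ℕ | ∃ f : Fin r → ((∀ i, ι i) → K),
      (∀ j, HasPartitionRankOne (f j)) ∧ T = ∑ j, f j} with hP
  have hSne : P.Nonempty := ⟨r, f, hf, hsum⟩
  by_contra hcon
  push_neg at hcon
  have hcon' : sInf P < 2 := hcon
  have hmem : sInf P ∈ P := Nat.sInf_mem hSne
  have h01 : sInf P = 0 ∨ sInf P = 1 := by omega
  rcases h01 with h | h <;> rw [h] at hmem
  · obtain ⟨g, -, hgs⟩ := hmem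
    exact h0 (by simpa using hgs)
  · obtain ⟨g, hg, hgs⟩ := hmem
    have hT0 : T = g 0 := by simpa using hgs
    exact h1 (hT0 ▸ hg 0)

noncomputable def entPoly {k : ℕ} {n : Fin k → ℕ} (m : Fin k → ℕ)
    (T : (∀ i, Fin (n i)) → K) (w : ∀ i, Fin (m i)) :
    MvPolynomial ((i : Fin k) × (Fin (m i) × Fin (n i))) K :=
  ∑ x : ∀ i, Fin (n i), (∏ i, MvPolynomial.X ⟨i, (w i, x i)⟩) * MvPolynomial.C (T x)

lemma eval_entPoly {k : ℕ} {n : Fin k → ℕ} (m : Fin k → ℕ)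
    (T : (∀ i, Fin (n i)) → K) (w : ∀ i, Fin (m i))
    (v : ((i : Fin k) × (Fin (m i) × Fin (n i))) → K) :
    MvPolynomial.eval v (entPoly m T w) = applyMaps (fun i y x => v ⟨i, (y, x)⟩) T w := by
  simp [entPoly, applyMaps]

def wsel {k : ℕ} (m : Fin k → ℕ) (hm : ∀ i, 2 ≤ m i) (I : Finset (Fin k)) (u v : Fin 2) :
    ∀ i, Fin (m i) :=
  fun i => ⟨if i ∈ I then u.val else v.val, by
    have h2 := hm i; have hu := u.isLt; have hv := v.isLt; split <;> omega⟩

def rsel {k : ℕ} (m : Fin k → ℕ) (hm : ∀ i, 2 ≤ m i) (I : Finset (Fin k)) (u : Fin 2) :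
    ∀ i : {i // i ∈ I}, Fin (m i.1) :=
  fun i => ⟨u.val, by have := hm i.1; have := u.isLt; omega⟩

def csel {k : ℕ} (m : Fin k → ℕ) (hm : ∀ i, 2 ≤ m i) (I : Finset (Fin k)) (v : Fin 2) :
    ∀ i : {i // i ∉ I}, Fin (m i.1) :=
  fun i => ⟨v.val, by have := hm i.1; have := v.isLt; omega⟩

set_option linter.unusedSectionVars false in
lemma flatten_sel {k : ℕ} {m : Fin k → ℕ} (hm : ∀ i, 2 ≤ m i)
    (S : (∀ i, Fin (m i)) → K) (I : Finset (Fin k)) (u v : Fin 2) :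
    flatten S I (rsel m hm I u) (csel m hm I v) = S (wsel m hm I u v) := by
  show S _ = S _
  congr 1
  funext i
  by_cases h : i ∈ I
  · rw [dif_pos h]
    apply Fin.ext
    show u.val = if i ∈ I then u.val else v.val
    rw [if_pos h]
  · rw [dif_neg h]
    apply Fin.ext
    show v.val = if i ∈ I then u.val else v.val
    rw [if_neg h]

noncomputable def minorPoly {k : ℕ} {n : Fin k → ℕ} (m : Fin k → ℕ) (hm : ∀ i, 2 ≤ m i)
    (T : (∀ i, Fin (n i)) → K) (I : Finset (Fin k)) :
    MvPolynomial ((i : Fin k) × (Fin (m i) × Fin (n i))) K :=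
  entPoly m T (wsel m hm I 0 0) * entPoly m T (wsel m hm I 1 1) -
  entPoly m T (wsel m hm I 0 1) * entPoly m T (wsel m hm I 1 0)

lemma two_le_rank_of_eval_minorPoly {k : ℕ} {n : Fin k → ℕ} {m : Fin k → ℕ}
    (hm : ∀ i, 2 ≤ m i) (T : (∀ i, Fin (n i)) → K) (I : Finset (Fin k))
    (v : ((i : Fin k) × (Fin (m i) × Fin (n i))) → K)
    (h : MvPolynomial.eval v (minorPoly m hm T I) ≠ 0) :
    2 ≤ (flatten (applyMaps (fun i y x => v ⟨i, (y, x)⟩) T) I).rank := by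
  classical
  have hev : MvPolynomial.eval v (minorPoly m hm T I) =
      flatten (applyMaps (fun i y x => v ⟨i, (y, x)⟩) T) I (rsel m hm I 0) (csel m hm I 0) *
        flatten (applyMaps (fun i y x => v ⟨i, (y, x)⟩) T) I (rsel m hm I 1) (csel m hm I 1) -
      flatten (applyMaps (fun i y x => v ⟨i, (y, x)⟩) T) I (rsel m hm I 0) (csel m hm I 1) *
        flatten (applyMaps (fun i y x => v ⟨i, (y, x)⟩) T) I (rsel m hm I 1) (csel m hm I 0) := by
    rw [minorPoly, map_sub, _root_.map_mul, _root_.map_mul, eval_entPoly, eval_entPoly, eval_entPoly,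
      eval_entPoly, flatten_sel hm, flatten_sel hm, flatten_sel hm, flatten_sel hm]
  exact two_le_rank_of_minor (hev ▸ h)

lemma minorPoly_ne_zero {k : ℕ} {n : Fin k → ℕ} {m : Fin k → ℕ} (hm : ∀ i, 2 ≤ m i)
    {T : (∀ i, Fin (n i)) → K} {I : Finset (Fin k)}
    (h2 : 2 ≤ (flatten T I).rank) : minorPoly m hm T I ≠ 0 := by
  classical
  obtain ⟨p1, p2, q1, q2, hminor⟩ :
      ∃ p1 p2 q1 q2, flatten T I p1 q1 * flatten T I p2 q2
        - flatten T I p1 q2 * flatten T I p2 q1 ≠ 0 := by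
    by_contra hc
    push_neg at hc
    have hle := rank_le_one_of_minors (M := flatten T I)
      (fun a b c d => sub_eq_zero.mp (hc a b c d))
    omega
  set D : ∀ i : Fin k, Fin 2 → Fin (n i) :=
    fun i t => if h : i ∈ I then (if t = 0 then p1 ⟨i, h⟩ else p2 ⟨i, h⟩)
      else (if t = 0 then q1 ⟨i, h⟩ else q2 ⟨i, h⟩) with hD
  set v0 : ((i : Fin k) × (Fin (m i) × Fin (n i))) → K :=
    fun s => if h : s.2.1.val < 2 then (if s.2.2 = D s.1 ⟨s.2.1.val, h⟩ then 1 else 0) else 0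
    with hv0
  have hev : ∀ u v : Fin 2, MvPolynomial.eval v0 (entPoly m T (wsel m hm I u v)) =
      flatten T I (if u = 0 then p1 else p2) (if v = 0 then q1 else q2) := by
    intro u v
    rw [eval_entPoly]
    have hA : ∀ (i : Fin k) (x : Fin (n i)),
        v0 ⟨i, (wsel m hm I u v i, x)⟩ = if x = D i (if i ∈ I then u else v) then 1 else 0 := by
      intro i x
      have hlt : (wsel m hm I u v i).val < 2 := by
        show (if i ∈ I then u.val else v.val) < 2
        have := u.isLt; have := v.isLt
        split <;> omega
      rw [hv0]
      dsimp only
      rw [dif_pos hlt]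
      have heq : (⟨(wsel m hm I u v i).val, hlt⟩ : Fin 2) = (if i ∈ I then u else v) := by
        apply Fin.ext
        show (if i ∈ I then u.val else v.val) = _
        rw [apply_ite Fin.val]
      rw [heq]
    calc applyMaps (fun i y x => v0 ⟨i, (y, x)⟩) T (wsel m hm I u v)
        = ∑ x : ∀ i, Fin (n i),
            (∏ i, if x i = D i (if i ∈ I then u else v) then 1 else 0) * T x := by
          simp only [applyMaps]
          refine Finset.sum_congr rfl (fun x _ => ?_)
          congr 1
          exact Finset.prod_congr rfl (fun i _ => hA i (x i))
      _ = ∑ x : ∀ i, Fin (n i),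
            (if x = (fun i => D i (if i ∈ I then u else v)) then 1 else 0) * T x := by
          refine Finset.sum_congr rfl (fun x _ => ?_)
          congr 1
          by_cases hxt : x = (fun i => D i (if i ∈ I then u else v))
          · rw [if_pos hxt]
            refine Finset.prod_eq_one (fun i _ => ?_)
            rw [if_pos (congrFun hxt i)]
          · rw [if_neg hxt]
            obtain ⟨i, hi⟩ : ∃ i, x i ≠ D i (if i ∈ I then u else v) := by
              by_contra hcc
              push_neg at hcc
              exact hxt (funext hcc)
            exact Finset.prod_eq_zero (Finset.mem_univ i) (if_neg hi)
      _ = T (fun i => D i (if i ∈ I then u else v)) := by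
          simp only [ite_mul, one_mul, zero_mul]
          rw [Finset.sum_ite_eq' Finset.univ (fun i => D i (if i ∈ I then u else v)) T]
          simp
      _ = flatten T I (if u = 0 then p1 else p2) (if v = 0 then q1 else q2) := by
          show T _ = T _
          congr 1
          funext i
          rw [hD]
          dsimp only
          by_cases h : i ∈ I
          · rw [if_pos h, dif_pos h, dif_pos h]
            split_ifs <;> rfl
          · rw [if_neg h, dif_neg h, dif_neg h]
            split_ifs <;> rfl
  intro h0
  apply hminor
  have hz := congrArg (MvPolynomial.eval v0) h0
  rw [map_zero, minorPoly, map_sub, _root_.map_mul, _root_.map_mul, hev, hev, hev, hev] at hz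
  have e0 : (if (0 : Fin 2) = 0 then p1 else p2) = p1 := if_pos rfl
  have e1 : (if (1 : Fin 2) = 0 then p1 else p2) = p2 := if_neg (by decide)
  have f0 : (if (0 : Fin 2) = 0 then q1 else q2) = q1 := if_pos rfl
  have f1 : (if (1 : Fin 2) = 0 then q1 else q2) = q2 := if_neg (by decide)
  rw [e0, e1, f0, f1] at hz
  exact hz

end PrankAux

open GapSubrank in
/-- partition rank at least two is preserved under some restriction
to any prescribed format with all dimensions at least two. -/
theorem prank_two_preserved (K : Type) [Field K] [IsAlgClosed K]
    (k : ℕ) (hk : 3 ≤ k) (n m : Fin k → ℕ) (hm : ∀ i, 2 ≤ m i)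
    (T : (∀ i, Fin (n i)) → K) (hT : 2 ≤ prank T) :
    ∃ A : ∀ i, Fin (m i) → Fin (n i) → K, 2 ≤ prank (applyMaps A T) := by
  classical
  have hT0 : T ≠ 0 := by
    intro h
    have h0mem : (0 : ℕ) ∈ {r : ℕ | ∃ f : Fin r → ((∀ i, Fin (n i)) → K),
        (∀ j, HasPartitionRankOne (f j)) ∧ T = ∑ j, f j} :=
      ⟨Fin.elim0, fun j => j.elim0, by simp [h]⟩
    have hle : prank T ≤ 0 := Nat.sInf_le h0mem
    omega
  have hTrank : ∀ I : Finset (Fin k), I ≠ ∅ → I ≠ Finset.univ → 2 ≤ (flatten T I).rank := by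
    intro I hI1 hI2
    have hne0 : flatten T I ≠ 0 := fun h => hT0 (PrankAux.eq_zero_of_flatten_eq_zero h)
    have h0 := PrankAux.rank_ne_zero_of_ne_zero hne0
    have h1 : (flatten T I).rank ≠ 1 := by
      intro h1
      have hmem : (1 : ℕ) ∈ {r : ℕ | ∃ f : Fin r → ((∀ i, Fin (n i)) → K),
          (∀ j, HasPartitionRankOne (f j)) ∧ T = ∑ j, f j} :=
        ⟨fun _ => T, fun _ => ⟨I, hI1, hI2, h1⟩, by simp⟩
      have hle : prank T ≤ 1 := Nat.sInf_le hmem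
      omega
    omega
  have hPne : (∏ I ∈ Finset.univ.filter (fun I : Finset (Fin k) => I ≠ ∅ ∧ I ≠ Finset.univ),
      PrankAux.minorPoly m hm T I) ≠ 0 := by
    rw [Finset.prod_ne_zero_iff]
    intro I hI
    obtain ⟨-, hI1, hI2⟩ := Finset.mem_filter.mp hI
    exact PrankAux.minorPoly_ne_zero hm (hTrank I hI1 hI2)
  obtain ⟨v, hv⟩ : ∃ v, MvPolynomial.eval v
      (∏ I ∈ Finset.univ.filter (fun I : Finset (Fin k) => I ≠ ∅ ∧ I ≠ Finset.univ),
        PrankAux.minorPoly m hm T I) ≠ 0 := by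
    by_contra hc
    simp only [not_exists, ne_eq, not_not] at hc
    exact hPne (MvPolynomial.funext (fun x => by rw [hc x, map_zero]))
  refine ⟨fun i y x => v ⟨i, (y, x)⟩, ?_⟩
  have hrankS : ∀ I : Finset (Fin k), I ≠ ∅ → I ≠ Finset.univ →
      2 ≤ (flatten (applyMaps (fun i y x => v ⟨i, (y, x)⟩) T) I).rank := by
    intro I hI1 hI2
    apply PrankAux.two_le_rank_of_eval_minorPoly hm T I v
    intro h0
    rw [map_prod] at hv
    exact hv (Finset.prod_eq_zero
      (Finset.mem_filter.mpr ⟨Finset.mem_univ _, hI1, hI2⟩) h0)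
  have h0k : (0 : ℕ) < k := by omega
  have hI0 : ({(⟨0, h0k⟩ : Fin k)} : Finset (Fin k)) ≠ ∅ := by simp
  have hI0' : ({(⟨0, h0k⟩ : Fin k)} : Finset (Fin k)) ≠ Finset.univ := by
    intro h
    have h1 : (⟨1, by omega⟩ : Fin k) ∈ ({(⟨0, h0k⟩ : Fin k)} : Finset (Fin k)) := by
      rw [h]; exact Finset.mem_univ _
    rw [Finset.mem_singleton] at h1
    exact absurd (congrArg Fin.val h1) (by simp)
  have hS0 : applyMaps (fun i y x => v ⟨i, (y, x)⟩) T ≠ 0 := by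
    intro h
    have h2 := hrankS _ hI0 hI0'
    have hz : flatten (applyMaps (fun i y x => v ⟨i, (y, x)⟩) T)
        ({(⟨0, h0k⟩ : Fin k)} : Finset (Fin k)) = 0 := by
      rw [h]; funext p q; rfl
    rw [hz, Matrix.rank_zero] at h2
    omega
  have hnP : ¬ HasPartitionRankOne (applyMaps (fun i y x => v ⟨i, (y, x)⟩) T) := by
    rintro ⟨I, hI1, hI2, hI3⟩
    have := hrankS I hI1 hI2
    omega
  exact PrankAux.two_le_prank hS0 hnP
    (PrankAux.exists_decomp hk (applyMaps (fun i y x => v ⟨i, (y, x)⟩) T))
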